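/- arXiv:2602.11843 — 4 statements merged into one kernel-verified Lean document; each statement's English description precedes it below -/
import Mathlib

section
/- For any element B of a commutative ℚ-algebra, setting U = B^2, V = U·(B + 2U), P = (3/20)·B + 2U + V, Q = (11/40)·B − (1/8)·U + (1/4)·V, and W = P·Q, one has W + 1 + B + (767/800)·U + (15/32)·V = Σ_{j=0}^{8} B^j; i.e., the radix-9 kernel computes T_9(B) in three multiplications. -/
open Polynomial in
/-- Radix-9 kernel in three multiplications, in any commutative ℚ-algebra. -/
theorem radix9_kernel {R : Type*} [CommRing R] [Algebra ℚ R] (B U V P Q W : R)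
    (hU : U = B ^ 2)
    (hV : V = U * (B + 2 * U))
    (hP : P = (3 / 20 : ℚ) • B + 2 * U + V)
    (hQ : Q = (11 / 40 : ℚ) • B - (1 / 8 : ℚ) • U + (1 / 4 : ℚ) • V)
    (hW : W = P * Q) :
    W + 1 + B + (767 / 800 : ℚ) • U + (15 / 32 : ℚ) • V =
      ∑ j ∈ Finset.range 9, B ^ j := by
  subst hW hP hQ hV hU
  have key : (C (3/20 : ℚ) * X + 2 * X ^ 2 + X ^ 2 * (X + 2 * X ^ 2)) *
      (C (11/40 : ℚ) * X - C (1/8 : ℚ) * X ^ 2 +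
        C (1/4 : ℚ) * (X ^ 2 * (X + 2 * X ^ 2))) + 1 + X +
      C (767/800 : ℚ) * X ^ 2 + C (15/32 : ℚ) * (X ^ 2 * (X + 2 * X ^ 2)) =
      ∑ j ∈ Finset.range 9, (X : ℚ[X]) ^ j := by
    apply Polynomial.funext
    intro x
    simp [Finset.sum_range_succ]
    ring
  have h := congrArg (aeval B) key
  simp only [map_add, map_mul, map_sub, map_pow, map_one, map_ofNat, aeval_C, aeval_X,
    Finset.sum_range_succ, Finset.sum_range_zero, map_zero] at h ⊢
  simp only [Algebra.smul_def]
  convert h using 2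
end

section
/- If f is an approximate radix-m kernel (m ≥ 1) with error map E(z) = 1 − (1−z)f(z), then the polynomial (1−z)·f(z)·f(E(z)) − 1 is divisible by z^{m^2}; equivalently, f(z)·f(E(z)) agrees with the power series (1−z)^{−1} through degree m^2 − 1. -/
open Polynomial

/-- Prefix growth: if `f` is an approximate radix-m kernel with error map
`E = 1 − (1−z)f(z)`, then `(1−z)·f(z)·f(E(z)) − 1` is divisible by `z^{m²}`,
so `f(z)·f(E(z))` agrees with `(1−z)⁻¹` through degree `m² − 1`. -/
theorem prefix_growth {R : Type*} [CommRing R] (m : ℕ) (hm : 1 ≤ m)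
    (f : R[X]) (hf : X ^ m ∣ (1 - X) * f - 1)
    (E : R[X]) (hE : E = 1 - (1 - X) * f) :
    X ^ (m ^ 2) ∣ (1 - X) * f * (f.comp E) - 1 := by
  have hdivE : X ^ m ∣ E := by
    rw [hE]
    simpa [neg_sub] using dvd_neg.mpr hf
  obtain ⟨h, hh⟩ : X ^ m ∣ (1 - (1 - X) * f) := hE ▸ hdivE
  have key : (1 - X) * f * (f.comp E) - 1 = -(((X ^ m) * h).comp E) := by
    rw [← hh, sub_comp, one_comp, mul_comp, sub_comp, one_comp, X_comp]
    rw [hE]; ring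
  rw [key, mul_comp, pow_comp, X_comp, dvd_neg]
  obtain ⟨e, he⟩ := hdivE
  rw [he, mul_pow, ← pow_mul, ← pow_two]
  exact ⟨e ^ m * h.comp (X ^ m * e), by ring⟩
end

section
/- Let M = I − A for a square matrix A, let f be an approximate radix-m kernel with error map E, and define Y_0 = I, R_0 = A, Y_{n+1} = Y_n · f(R_n), R_{n+1} = I − M·Y_{n+1}. Then for all n, R_n = E^{[n]}(A), where E^{[n]} is the n-fold composition of E evaluated at the matrix A. -/
open Polynomial

/-- General radix-kernel matrix iteration: with `M = I − A`, `Y₀ = I`, `R₀ = A`,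
`Y_{n+1} = Yₙ · f(Rₙ)`, `R_{n+1} = I − M·Y_{n+1}`, where `f` is an approximate
radix-m kernel with error map `E = 1 − (1−z)f(z)`, one has `Rₙ = E^{[n]}(A)`. -/
theorem radix_kernel_iteration {d : ℕ} {K : Type*} [CommRing K]
    (A : Matrix (Fin d) (Fin d) K) (m : ℕ) (hm : 1 ≤ m)
    (f : K[X]) (hf : X ^ m ∣ (1 - X) * f - 1)
    (E : K[X]) (hE : E = 1 - (1 - X) * f)
    (M : Matrix (Fin d) (Fin d) K) (hM : M = 1 - A)
    (Y Rs : ℕ → Matrix (Fin d) (Fin d) K)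
    (hY0 : Y 0 = 1) (hR0 : Rs 0 = A)
    (hYs : ∀ n, Y (n + 1) = Y n * Polynomial.aeval (Rs n) f)
    (hRs : ∀ n, Rs (n + 1) = 1 - M * Y (n + 1)) :
    ∀ n, Rs n = Polynomial.aeval A ((fun q : K[X] => E.comp q)^[n] X) := by
  have key : ∀ n, Rs n = Polynomial.aeval A ((fun q : K[X] => E.comp q)^[n] X) ∧
      M * Y n = 1 - Rs n := by
    intro n
    induction n with
    | zero =>
      constructor
      · simp [hR0]
      · simp [hY0, hM, hR0]
    | succ n ih =>
      obtain ⟨ih1, ih2⟩ := ih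
      have hstep : Rs (n + 1) = Polynomial.aeval (Rs n) E := by
        rw [hRs n, hYs n, ← mul_assoc, ih2, hE]
        simp [mul_sub, sub_mul]
      constructor
      · rw [hstep, ih1, Function.iterate_succ_apply']
        exact (Polynomial.aeval_comp A).symm
      · rw [hRs n, sub_sub_cancel]
  exact fun n => (key n).1
end

section
/- With the iteration Y_{n+1} = Y_n·f(R_n), R_{n+1} = I − (I−A)·Y_{n+1}, starting from Y_0 = I, R_0 = A, with f an approximate radix-m kernel (m ≥ 2): the residual R_n, viewed as a polynomial in A, is divisible by A^{m^n}; i.e., there exists a polynomial g with R_n = A^{m^n}·g(A). -/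
open Polynomial

/-- Residual divisibility: under the general radix-kernel iteration with an
approximate radix-m kernel (`m ≥ 2`), the residual `Rₙ` is `A^{m^n}` times a
polynomial in `A`. -/
theorem residual_divisibility {d : ℕ} {K : Type*} [CommRing K]
    (A : Matrix (Fin d) (Fin d) K) (m : ℕ) (hm : 2 ≤ m)
    (f : K[X]) (hf : X ^ m ∣ (1 - X) * f - 1)
    (Y Rs : ℕ → Matrix (Fin d) (Fin d) K)
    (hY0 : Y 0 = 1) (hR0 : Rs 0 = A)
    (hYs : ∀ n, Y (n + 1) = Y n * Polynomial.aeval (Rs n) f)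
    (hRs : ∀ n, Rs (n + 1) = 1 - (1 - A) * Y (n + 1)) :
    ∀ n, ∃ g : K[X], Rs n = A ^ (m ^ n) * Polynomial.aeval A g := by
  -- E is the error polynomial
  set E : K[X] := 1 - (1 - X) * f with hEdef
  have hE : X ^ m ∣ E := by
    have := hf.neg_right
    simpa [hEdef, neg_sub] using this
  -- invariant linking Rs and Y
  have hlink : ∀ n, Rs n = 1 - (1 - A) * Y n := by
    intro n
    cases n with
    | zero => simp [hR0, hY0]
    | succ k => exact hRs k
  -- main invariant
  have key : ∀ n, ∃ p : K[X], X ^ (m ^ n) ∣ p ∧ Rs n = Polynomial.aeval A p := by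
    intro n
    induction n with
    | zero => exact ⟨X, by simpa using dvd_refl (X : K[X]), by simp [hR0]⟩
    | succ k ih =>
      obtain ⟨p, hp, hRp⟩ := ih
      refine ⟨E.comp p, ?_, ?_⟩
      · obtain ⟨q, hq⟩ := hE
        rw [hq, Polynomial.mul_comp, Polynomial.pow_comp, Polynomial.X_comp]
        refine dvd_mul_of_dvd_left ?_ _
        calc X ^ m ^ (k + 1) = (X ^ m ^ k) ^ m := by rw [← pow_mul, ← pow_succ]
        _ ∣ p ^ m := pow_dvd_pow_of_dvd hp m
      · have h1 : Rs (k + 1) = Polynomial.aeval (Rs k) E := by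
          rw [hRs k, hYs k, hEdef]
          have : (1 - A) * Y k = 1 - Rs k := by rw [hlink k, sub_sub_cancel]
          simp only [map_sub, map_mul, map_one, Polynomial.aeval_X]
          rw [← mul_assoc, this]
        rw [h1, hRp, ← Polynomial.aeval_comp]
  intro n
  obtain ⟨p, ⟨g, hg⟩, hRp⟩ := key n
  exact ⟨g, by rw [hRp, hg, map_mul, Polynomial.aeval_X_pow]⟩
end
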